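/- Let 1 < α ≤ 2, 0 ≤ β ≤ α - 1, a < b. Define f(t) = ((t-a)^(α-1)/Γ(α+1)) · (α/(α-β)·(b-a) - (t-a)) for t ∈ [a,b]. Then max over t ∈ [a,b] of f(t) equals (α-1)^(α-1)/((α-β)^α Γ(α+1)) · (b-a)^α, attained at t* = a + (α-1)/(α-β)·(b-a). -/

import Mathlib

theorem stmt_7 (α β a b : ℝ) (hα : 1 < α) (hα2 : α ≤ 2) (hβ : 0 ≤ β)
    (hβα : β ≤ α - 1) (hab : a < b)
    (f : ℝ → ℝ)
    (hf : ∀ t, f t = (t - a) ^ (α - 1) / Real.Gamma (α + 1) *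
      (α / (α - β) * (b - a) - (t - a))) :
    let t₀ := a + (α - 1) / (α - β) * (b - a)
    t₀ ∈ Set.Icc a b ∧
      f t₀ = (α - 1) ^ (α - 1) / ((α - β) ^ α * Real.Gamma (α + 1)) *
        (b - a) ^ α ∧
      ∀ t ∈ Set.Icc a b, f t ≤ f t₀ := by
  intro t₀
  have ht₀ : t₀ = a + (α - 1) / (α - β) * (b - a) := rfl
  have hL : (0:ℝ) < b - a := sub_pos.mpr hab
  have hA : (0:ℝ) < α - β := by linarith
  have hα1 : (0:ℝ) < α - 1 := by linarith
  have hα0 : (0:ℝ) < α := by linarith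
  have hΓ : 0 < Real.Gamma (α + 1) := Real.Gamma_pos_of_pos (by linarith)
  set x₀ : ℝ := (α - 1) / (α - β) * (b - a) with hx₀def
  have hx₀pos : 0 < x₀ := by positivity
  have hy₀ : α / (α - β) * (b - a) - x₀ = (b - a) / (α - β) := by
    field_simp [hx₀def]; rw [hx₀def]; field_simp; ring
  have hy₀pos : (0:ℝ) < (b - a) / (α - β) := by positivity
  have ht₀a : t₀ - a = x₀ := by rw [ht₀]; ring
  -- membership
  have hmem : t₀ ∈ Set.Icc a b := by
    constructor
    · nlinarith [hx₀pos]
    · rw [ht₀]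
      have : (α - 1) / (α - β) ≤ 1 := by rw [div_le_one hA]; linarith
      nlinarith [this, hL]
  refine ⟨hmem, ?_, ?_⟩
  -- value at t₀
  · rw [hf, ht₀a, hy₀]
    have h1 : x₀ ^ (α - 1) = (α - 1) ^ (α - 1) / (α - β) ^ (α - 1) * (b - a) ^ (α - 1) := by
      rw [hx₀def, Real.mul_rpow (by positivity) hL.le, Real.div_rpow hα1.le hA.le]
    have h2 : (b - a) ^ α = (b - a) ^ (α - 1) * (b - a) := by
      rw [← Real.rpow_add_one hL.ne']; congr 1; ring
    have h3 : (α - β) ^ α = (α - β) ^ (α - 1) * (α - β) := by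
      rw [← Real.rpow_add_one hA.ne']; congr 1; ring
    rw [h1, h2, h3]
    have p1 : (0:ℝ) < (α - β) ^ (α - 1) := by positivity
    field_simp
  -- maximality
  · intro t ht
    obtain ⟨hta, htb⟩ := ht
    set x : ℝ := t - a with hxdef
    have hx0 : 0 ≤ x := by simp [hxdef]; linarith
    have hxL : x ≤ b - a := by simp [hxdef]; linarith
    set y : ℝ := α / (α - β) * (b - a) - x with hydef
    have hy0 : 0 ≤ y := by
      have h1 : (1:ℝ) ≤ α / (α - β) := by rw [le_div_iff₀ hA]; linarith
      have h2 : b - a ≤ α / (α - β) * (b - a) := le_mul_of_one_le_left hL.le h1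
      rw [hydef]; linarith
    set y₀ : ℝ := (b - a) / (α - β) with hy₀def
    have key : x ^ (α - 1) * y ≤ x₀ ^ (α - 1) * y₀ := by
      have hw : (α - 1) / α + 1 / α = 1 := by field_simp; ring
      have hgm := Real.geom_mean_le_arith_mean2_weighted
        (by positivity : (0:ℝ) ≤ (α - 1) / α) (by positivity : (0:ℝ) ≤ 1 / α)
        (by positivity : (0:ℝ) ≤ x / x₀) (by positivity : (0:ℝ) ≤ y / y₀) hw
      have hsum : (α - 1) / α * (x / x₀) + 1 / α * (y / y₀) = 1 := by
        rw [hydef, hy₀def, hx₀def]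
        field_simp
        ring
      rw [hsum] at hgm
      have hpow := Real.rpow_le_one (by positivity) hgm hα0.le
      rw [Real.mul_rpow (by positivity) (by positivity),
        ← Real.rpow_mul (by positivity), ← Real.rpow_mul (by positivity),
        div_mul_cancel₀ _ hα0.ne', one_div_mul_cancel hα0.ne', Real.rpow_one,
        Real.div_rpow hx0 hx₀pos.le, div_mul_div_comm,
        div_le_one (by positivity)] at hpow
      linarith [hpow]
    rw [hf, hf, ht₀a, hy₀, ← hxdef, ← hydef]
    rw [div_mul_eq_mul_div, div_mul_eq_mul_div]
    gcongr
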